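/- Let (W,S) be a Coxeter system and ω = (ω_1,...,ω_m) a word in S. A subword α ⊆ ω is ω-sorted if and only if it is reduced and there does not exist an index 1 ≤ j < m with ω_j ∉ α (i.e., j ∉ I(α)) such that ω_j is a left descent of the group element ⟨α ∩ (ω_{j+1},...,ω_m)⟩, i.e., ℓ(ω_j · ⟨α ∩ (ω_{j+1},...,ω_m)⟩) < ℓ(⟨α ∩ (ω_{j+1},...,ω_m)⟩). -/

import Mathlib

namespace SortingPaper

variable {B : Type*} {M : CoxeterMatrix B} {W : Type*} [Group W]

/-- The subword of `ω` with index set `A` (0-based indices). -/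
def subword (ω : List B) (A : Finset ℕ) : List B :=
  (A.sort (· ≤ ·)).filterMap (fun i => ω[i]?)

/-- Lexicographic comparison of index sets: `A ≤lex C` iff `A = C` or the minimum
element of the symmetric difference belongs to `A`. -/
def lexLE (A C : Finset ℕ) : Prop :=
  A = C ∨ ∃ k, k ∈ A ∧ k ∉ C ∧ ∀ j < k, (j ∈ A ↔ j ∈ C)

/-- `A` is the index set of an ω-sorted word: the corresponding subword is reduced, and
`A` is lexicographically least among index sets of reduced subwords of `ω` with the
same product in `W`. -/
def IsSorted (cs : CoxeterSystem M W) (ω : List B) (A : Finset ℕ) : Prop :=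
  A ⊆ Finset.range ω.length ∧ cs.IsReduced (subword ω A) ∧
  ∀ C ⊆ Finset.range ω.length, cs.IsReduced (subword ω C) →
    cs.wordProd (subword ω C) = cs.wordProd (subword ω A) → lexLE A C

/-- The ω-sorting algorithm (auxiliary): scan the word, recording positions that are
left descents of the current element. -/
noncomputable def sortAux (cs : CoxeterSystem M W) : List B → ℕ → W → Finset ℕ
  | [], _, _ => ∅
  | s :: rest, i, x =>
    if cs.length (cs.simple s * x) < cs.length x then
      insert i (sortAux cs rest (i + 1) (cs.simple s * x))
    else sortAux cs rest (i + 1) x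

/-- The index set produced by the ω-sorting algorithm applied to `u ∈ W`. -/
noncomputable def sortIdx (cs : CoxeterSystem M W) (ω : List B) (u : W) : Finset ℕ :=
  sortAux cs ω 0 u

section Exchange

attribute [local instance] Classical.propDecidable

open List

variable (cs : CoxeterSystem M W)

local prefix:100 "s" => cs.simple
local prefix:100 "π" => cs.wordProd
local prefix:100 "ℓ" => cs.length
local prefix:100 "lis" => cs.leftInvSeq

/-- The reflection-sign function underlying the permutation representation. -/
noncomputable def etaFun (i : B) : W × ZMod 2 → W × ZMod 2 :=
  fun p => (s i * p.1 * s i, p.2 + if p.1 = s i then 1 else 0)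

lemma etaFun_involutive (i : B) : Function.Involutive (etaFun cs i) := by
  intro ⟨t, ε⟩
  simp only [etaFun]
  have h1 : s i * (s i * t * s i) * s i = t := by
    group
    simp [cs.simple_sq, mul_assoc]
  have h2 : (s i * t * s i = s i) ↔ (t = s i) := by
    constructor
    · intro h
      have := congrArg (fun x => s i * x * s i) h
      simpa [h1] using this
    · intro h; simp [h, cs.simple_mul_simple_self]
  simp only [Prod.mk.injEq, h1]
  refine ⟨trivial, ?_⟩
  have hz : ∀ a : ZMod 2, a + a = 0 := by decide
  rcases eq_or_ne t (s i) with h | h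
  · simp [h, h2, add_assoc, hz]
  · simp [h, h2]

/-- The permutation representation generator. -/
noncomputable def eta (i : B) : Equiv.Perm (W × ZMod 2) :=
  (etaFun_involutive cs i).toPerm

@[simp] lemma eta_apply (i : B) (p : W × ZMod 2) :
    eta cs i p = (s i * p.1 * s i, p.2 + if p.1 = s i then 1 else 0) := rfl

lemma simple_conj_pow (i i' : B) (k : ℕ) :
    s i' * (s i * s i') ^ k * s i' = ((s i * s i') ^ k)⁻¹ := by
  have h : s i' * (s i * s i') * (s i')⁻¹ = (s i * s i')⁻¹ := by
    rw [cs.inv_simple, mul_inv_rev, cs.inv_simple, cs.inv_simple]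
    group
    simp [cs.simple_sq, mul_assoc]
  calc s i' * (s i * s i') ^ k * s i'
      = s i' * (s i * s i') ^ k * (s i')⁻¹ := by rw [cs.inv_simple]
    _ = (s i' * (s i * s i') * (s i')⁻¹) ^ k := by rw [conj_pow]
    _ = ((s i * s i')^k)⁻¹ := by rw [h, inv_pow]

lemma eta_mul_pow (i i' : B) (k : ℕ) (t : W) (ε : ZMod 2) :
    ((eta cs i * eta cs i') ^ k) (t, ε) =
      ((s i * s i')^k * t * ((s i * s i')^k)⁻¹,
        ε + ∑ q ∈ Finset.range (2 * k),
          (if t = ((s i * s i')^q)⁻¹ * s i' then (1 : ZMod 2) else 0)) := by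
  set u := s i * s i' with hu
  induction k generalizing t ε with
  | zero => simp
  | succ k ih =>
    rw [pow_succ, Equiv.Perm.mul_apply]
    have hsus : s i' * u * s i' = u⁻¹ := by
      have h := simple_conj_pow cs i i' 1
      rwa [pow_one] at h
    have step : (eta cs i * eta cs i') (t, ε) =
        (u * t * u⁻¹, ε + ((if t = s i' then (1:ZMod 2) else 0)
          + (if t = u⁻¹ * s i' then (1:ZMod 2) else 0))) := by
      rw [Equiv.Perm.mul_apply, eta_apply, eta_apply]
      simp only [Prod.mk.injEq]
      refine ⟨?_, ?_⟩
      · show s i * (s i' * t * s i') * s i = u * t * u⁻¹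
        rw [hu, mul_inv_rev, cs.inv_simple, cs.inv_simple]
        group
      · show ε + _ + _ = _
        have h2 : (s i' * t * s i' = s i) ↔ (t = u⁻¹ * s i') := by
          constructor
          · intro h
            have h' := congrArg (fun x => s i' * x * s i') h
            have hl : s i' * (s i' * t * s i') * s i' = t := by
              group; simp [cs.simple_sq, mul_assoc]
            rw [hl] at h'
            rw [h', hu, mul_inv_rev, cs.inv_simple, cs.inv_simple]
          · intro h
            rw [h, hu, mul_inv_rev, cs.inv_simple, cs.inv_simple]
            group
            simp [cs.simple_sq, mul_assoc]
        rw [h2, add_assoc]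
    rw [step, ih]
    have key1 : ∀ q : ℕ, (u * t * u⁻¹ = (u^q)⁻¹ * s i') ↔ (t = (u^(q+2))⁻¹ * s i') := by
      intro q
      have h4 : s i' * u = u⁻¹ * s i' := by
        calc s i' * u = (s i' * u * s i') * s i' := by
              rw [mul_assoc, cs.simple_mul_simple_self, mul_one]
          _ = u⁻¹ * s i' := by rw [hsus]
      have huu : u⁻¹ * ((u ^ q)⁻¹ * s i') * u = (u^(q+2))⁻¹ * s i' := by
        calc u⁻¹ * ((u ^ q)⁻¹ * s i') * u = (u^(q+1))⁻¹ * (s i' * u) := by group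
          _ = (u^(q+1))⁻¹ * (u⁻¹ * s i') := by rw [h4]
          _ = (u^(q+2))⁻¹ * s i' := by group
      constructor
      · intro h
        have h' := congrArg (fun x => u⁻¹ * x * u) h
        have hl : u⁻¹ * (u * t * u⁻¹) * u = t := by group
        rw [hl] at h'
        rw [h', huu]
      · intro h
        have : u * ((u^(q+2))⁻¹ * s i') * u⁻¹ = (u^q)⁻¹ * s i' := by
          rw [← huu]; group
        rw [h, this]
    simp only [Prod.mk.injEq, key1]
    refine ⟨?_, ?_⟩
    · show u^k * (u * t * u⁻¹) * (u^k)⁻¹ = u^(k+1) * t * (u^(k+1))⁻¹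
      rw [pow_succ']
      group
    · have h2k : 2 * (k + 1) = 2 * k + 1 + 1 := by ring
      rw [h2k, Finset.sum_range_succ', Finset.sum_range_succ']
      have hq2 : ∀ q:ℕ, q + 1 + 1 = q + 2 := fun q => rfl
      simp only [hq2, pow_zero, inv_one, one_mul, pow_one, zero_add]
      abel

lemma eta_liftable : M.IsLiftable (fun i => eta cs i) := by
  intro i i'
  refine Equiv.ext fun p => ?_
  obtain ⟨t, ε⟩ := p
  show ((eta cs i * eta cs i') ^ M.M i i') (t, ε) = (1 : Equiv.Perm (W × ZMod 2)) (t, ε)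
  rw [eta_mul_pow cs i i' (M i i') t ε, cs.simple_mul_simple_pow i i']
  simp only [Equiv.Perm.one_apply, inv_one, one_mul, mul_one, Prod.mk.injEq]
  refine ⟨trivial, ?_⟩
  have hper : ∀ q : ℕ,
        (if t = ((s i * s i')^(M i i' + q))⁻¹ * s i' then (1:ZMod 2) else 0)
          = (if t = ((s i * s i')^q)⁻¹ * s i' then (1:ZMod 2) else 0) := by
    intro q
    have : (s i * s i')^(M i i' + q) = (s i * s i')^q := by
      rw [pow_add, cs.simple_mul_simple_pow i i', one_mul]
    rw [this]
  have h2 : 2 * M.M i i' = M.M i i' + M.M i i' := by ring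
  rw [h2, Finset.sum_range_add]
  simp only [hper]
  have hz : ∀ a : ZMod 2, a + a = 0 := by decide
  rw [hz]
  simp

/-- The permutation representation of `W` on `W × ZMod 2`. -/
noncomputable def permRep : W →* Equiv.Perm (W × ZMod 2) :=
  cs.lift ⟨fun i => eta cs i, eta_liftable cs⟩

@[simp] lemma permRep_simple (i : B) : permRep cs (s i) = eta cs i :=
  cs.lift_apply_simple (eta_liftable cs) i

lemma conj_simple_apply (i : B) (t : W) :
    (MulAut.conj (s i)) (s i * t * s i) = t := by
  rw [MulAut.conj_apply, cs.inv_simple]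
  group
  simp [cs.simple_sq, mul_assoc]

lemma count_leftInvSeq_cons (i : B) (ω : List B) (t : W) :
    (lis (i :: ω)).count t
      = (if t = s i then 1 else 0) + (lis ω).count (s i * t * s i) := by
  show List.count t ((s i) :: List.map (⇑(MulAut.conj (s i))) (lis ω)) = _
  rw [List.count_cons]
  have hc : List.count t (List.map (⇑(MulAut.conj (s i))) (lis ω))
      = List.count (s i * t * s i) (lis ω) := by
    conv_lhs => rw [← conj_simple_apply cs i t]
    exact List.count_map_of_injective _ _ (MulAut.conj (s i)).injective _
  rw [hc, add_comm]
  congr 1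
  rcases eq_or_ne t (s i) with h | h
  · simp [h]
  · simp [h, Ne.symm h]

lemma permRep_wordProd_inv (ω : List B) (t : W) (ε : ZMod 2) :
    permRep cs (π ω)⁻¹ (t, ε) =
      ((π ω)⁻¹ * t * (π ω), ε + (((lis ω).count t : ℕ) : ZMod 2)) := by
  induction ω generalizing t ε with
  | nil => simp
  | cons i ω ih =>
    have h1 : (π (i :: ω))⁻¹ = (π ω)⁻¹ * s i := by
      rw [cs.wordProd_cons, mul_inv_rev, cs.inv_simple]
    rw [h1, map_mul, Equiv.Perm.mul_apply, permRep_simple, eta_apply]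
    simp only
    rw [ih, count_leftInvSeq_cons]
    simp only [Prod.mk.injEq]
    constructor
    · rw [cs.wordProd_cons]
      group
    · push_cast
      ring

lemma simple_mem_leftInvSeq_of_isLeftDescent {ω : List B} (hred : cs.IsReduced ω) {i : B}
    (h : ℓ (s i * π ω) < ℓ (π ω)) : s i ∈ lis ω := by
  obtain ⟨σ, hσred, hσ⟩ := cs.exists_reduced_word' (s i * π ω)
  have hπ : π (i :: σ) = π ω := by
    rw [cs.wordProd_cons, ← hσ, ← mul_assoc, cs.simple_mul_simple_self, one_mul]
  have e1 := permRep_wordProd_inv cs ω (s i) 0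
  have e2 := permRep_wordProd_inv cs (i :: σ) (s i) 0
  rw [hπ] at e2
  have hsnd := congrArg Prod.snd (e1.symm.trans e2)
  simp only [zero_add] at hsnd
  have hσcount : (lis σ).count (s i) = 0 := by
    rw [List.count_eq_zero]
    intro hmem
    have hinv := cs.isLeftInversion_of_mem_leftInvSeq hσred hmem
    have hlt : ℓ (s i * π σ) < ℓ (π σ) := hinv.2
    rw [← hσ, ← mul_assoc, cs.simple_mul_simple_self, one_mul] at hlt
    omega
  rw [count_leftInvSeq_cons] at hsnd
  have : s i * s i * s i = s i := by
    rw [cs.simple_mul_simple_self, one_mul]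
  rw [this, hσcount, if_pos rfl] at hsnd
  by_contra hnot
  rw [List.count_eq_zero.mpr hnot] at hsnd
  simp at hsnd

/-- The exchange property for simple reflections. -/
lemma exchange {ω : List B} (hred : cs.IsReduced ω) {i : B}
    (h : ℓ (s i * π ω) < ℓ (π ω)) :
    ∃ j, ∃ _ : j < ω.length, s i * π ω = π (ω.eraseIdx j) := by
  have hmem := simple_mem_leftInvSeq_of_isLeftDescent cs hred h
  obtain ⟨j, hj, hget⟩ := List.mem_iff_getElem.mp hmem
  rw [cs.length_leftInvSeq] at hj
  refine ⟨j, hj, ?_⟩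
  have hmw := cs.getD_leftInvSeq_mul_wordProd ω j
  rw [List.getD_eq_getElem _ _ (by rw [cs.length_leftInvSeq]; exact hj), hget] at hmw
  exact hmw

end Exchange

section Plumbing

open List

/-- split a sorted list by a downward-closed predicate -/
lemma sorted_split {p : ℕ → Bool} (hp : ∀ a b : ℕ, a ≤ b → p b = true → p a = true) :
    ∀ {l : List ℕ}, l.Pairwise (· ≤ ·) → l = l.filter p ++ l.filter (fun i => !(p i)) := by
  intro l
  induction l with
  | nil => simp
  | cons a t ih =>
    intro hs
    rw [List.pairwise_cons] at hs
    by_cases hpa : p a = true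
    · rw [List.filter_cons_of_pos hpa, List.filter_cons_of_neg (by simp [hpa])]
      rw [cons_append]
      congr 1
      exact ih hs.2
    · have hall : ∀ x ∈ t, p x = false := by
        intro x hx
        by_contra hx2
        exact hpa (hp a x (hs.1 x hx) (by simpa using hx2))
      rw [List.filter_cons_of_neg (by simpa using hpa),
        List.filter_cons_of_pos (by simp [hpa])]
      rw [List.filter_eq_nil_iff.mpr (fun x hx => by simp [hall x hx]), nil_append]
      congr 1
      exact (List.filter_eq_self.mpr (fun x hx => by simp [hall x hx])).symm

lemma sort_filter (A : Finset ℕ) (p : ℕ → Prop) [DecidablePred p] :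
    (A.filter p).sort (· ≤ ·) = (A.sort (· ≤ ·)).filter (fun i => decide (p i)) := by
  refine (fun hp h1 h2 => List.Perm.eq_of_pairwise' (r := (· ≤ ·)) h1 h2 hp) ?_ ?_ ?_
  · rw [List.perm_ext_iff_of_nodup (Finset.sort_nodup _ _)
      ((Finset.sort_nodup _ _).filter _)]
    intro a
    simp [Finset.mem_sort, List.mem_filter, Finset.mem_filter]
  · exact Finset.pairwise_sort _ _
  · exact (Finset.pairwise_sort _ _).filter _

lemma sort_split (A : Finset ℕ) (j : ℕ) :
    A.sort (· ≤ ·) = (A.filter (fun i => i ≤ j)).sort (· ≤ ·)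
      ++ (A.filter (fun i => j < i)).sort (· ≤ ·) := by
  rw [sort_filter, sort_filter]
  have hb : (fun i => decide (j < i)) = (fun i => !(decide (i ≤ j))) := by
    funext i
    by_cases h : i ≤ j
    · simp [h, Nat.not_lt.mpr h]
    · simp [h, Nat.not_le.mp h]
  rw [hb]
  exact sorted_split (by intro a b hab hb2; simp at hb2 ⊢; omega) (Finset.pairwise_sort _ _)

lemma sort_insert_top (A : Finset ℕ) (j : ℕ) (h : ∀ a ∈ A, a < j) :
    (insert j A).sort (· ≤ ·) = A.sort (· ≤ ·) ++ [j] := by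
  refine (fun hp h1 h2 => List.Perm.eq_of_pairwise' (r := (· ≤ ·)) h1 h2 hp) ?_ ?_ ?_
  · have hnd : (A.sort (· ≤ ·) ++ [j]).Nodup := by
      rw [List.nodup_append]
      refine ⟨Finset.sort_nodup _ _, List.nodup_singleton _, ?_⟩
      intro a ha b hj
      rw [Finset.mem_sort] at ha
      simp at hj
      subst hj
      exact ne_of_lt (h a ha)
    rw [List.perm_ext_iff_of_nodup (Finset.sort_nodup _ _) hnd]
    intro a
    simp [Finset.mem_sort, Finset.mem_insert, or_comm]
  · exact Finset.pairwise_sort _ _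
  · rw [List.pairwise_append]
    refine ⟨Finset.pairwise_sort _ _, List.pairwise_singleton _ _, ?_⟩
    intro a ha b hb
    simp at hb
    subst hb
    exact le_of_lt (h a (Finset.mem_sort (· ≤ ·) |>.mp ha))

lemma sort_erase (A : Finset ℕ) (k : ℕ) :
    (A.erase k).sort (· ≤ ·) = (A.sort (· ≤ ·)).erase k := by
  refine (fun hp h1 h2 => List.Perm.eq_of_pairwise' (r := (· ≤ ·)) h1 h2 hp) ?_ ?_ ?_
  · rw [List.perm_ext_iff_of_nodup (Finset.sort_nodup _ _)
      ((Finset.sort_nodup _ _).erase _)]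
    intro a
    rw [(Finset.sort_nodup _ _).mem_erase_iff]
    simp [Finset.mem_sort, Finset.mem_erase]
  · exact Finset.pairwise_sort _ _
  · exact List.Pairwise.sublist List.erase_sublist (Finset.pairwise_sort _ _)

lemma nodup_erase_getElem : ∀ (l : List ℕ) (n : ℕ) (hn : n < l.length), l.Nodup →
    l.erase l[n] = l.eraseIdx n := by
  intro l
  induction l with
  | nil => intro n hn; simp at hn
  | cons a t ih =>
    intro n hn hnd
    rw [List.nodup_cons] at hnd
    match n with
    | 0 => simp
    | n + 1 =>
      have hn' : n < t.length := by simpa using hn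
      have : (a :: t)[n+1] = t[n] := by simp
      rw [this]
      have hne : a ≠ t[n] := by
        intro hcon
        exact hnd.1 (hcon ▸ List.getElem_mem hn')
      rw [List.erase_cons_tail (by simpa using hne), List.eraseIdx_cons_succ,
        ih n hn' hnd.2]

lemma filterMap_eraseIdx {α β : Type*} (f : α → Option β) :
    ∀ (l : List α), (∀ x ∈ l, (f x).isSome) → ∀ (n : ℕ),
      (l.eraseIdx n).filterMap f = (l.filterMap f).eraseIdx n := by
  intro l
  induction l with
  | nil => simp
  | cons a t ih =>
    intro hf n
    obtain ⟨b, hb⟩ := Option.isSome_iff_exists.mp (hf a List.mem_cons_self)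
    have hft : ∀ x ∈ t, (f x).isSome := fun x hx => hf x (List.mem_cons_of_mem _ hx)
    match n with
    | 0 => simp [List.filterMap_cons, hb]
    | n + 1 =>
      rw [List.eraseIdx_cons_succ, List.filterMap_cons, List.filterMap_cons, hb,
        List.eraseIdx_cons_succ, ih hft n]

lemma filterMap_get?_length {α : Type*} (ω : List α) :
    ∀ (l : List ℕ), (∀ i ∈ l, i < ω.length) →
      (l.filterMap (fun i => ω[i]?)).length = l.length := by
  intro l
  induction l with
  | nil => simp
  | cons a t ih =>
    intro h
    rw [List.filterMap_cons, List.getElem?_eq_getElem (h a List.mem_cons_self)]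
    simp only [List.length_cons]
    rw [ih (fun i hi => h i (List.mem_cons_of_mem _ hi))]

lemma card_split (A : Finset ℕ) (j : ℕ) :
    (A.filter (fun i => i ≤ j)).card + (A.filter (fun i => j < i)).card = A.card := by
  have h := Finset.card_filter_add_card_filter_not (s := A) (fun i => i ≤ j)
  simpa [Nat.not_le] using h


end Plumbing

section Subword

open List

variable (cs : CoxeterSystem M W)

lemma subword_split (ω : List B) (A : Finset ℕ) (j : ℕ) :
    subword ω A = subword ω (A.filter (fun i => i ≤ j))
      ++ subword ω (A.filter (fun i => j < i)) := by
  unfold subword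
  rw [← List.filterMap_append]
  congr 1
  exact sort_split A j

lemma subword_length {ω : List B} {A : Finset ℕ} (h : A ⊆ Finset.range ω.length) :
    (subword ω A).length = A.card := by
  unfold subword
  rw [filterMap_get?_length]
  · exact Finset.length_sort _
  · intro i hi
    have := h ((Finset.mem_sort (· ≤ ·)).mp hi)
    simpa using this

lemma subword_insert_top {ω : List B} {A : Finset ℕ} {j : ℕ} (hj : j < ω.length)
    (h : ∀ a ∈ A, a < j) :
    subword ω (insert j A) = subword ω A ++ [ω.get ⟨j, hj⟩] := by
  unfold subword
  rw [sort_insert_top A j h, List.filterMap_append]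
  congr 1
  simp only [List.filterMap_cons, List.filterMap_nil, List.getElem?_eq_getElem hj, List.get_eq_getElem]

lemma subword_erase (ω : List B) (A : Finset ℕ) (hA : A ⊆ Finset.range ω.length) (n : ℕ)
    (hn : n < (A.sort (· ≤ ·)).length) :
    subword ω (A.erase ((A.sort (· ≤ ·))[n])) = (subword ω A).eraseIdx n := by
  unfold subword
  rw [sort_erase, nodup_erase_getElem _ n hn (Finset.sort_nodup _ _),
    filterMap_eraseIdx]
  intro x hx
  have hxr := hA ((Finset.mem_sort (· ≤ ·)).mp hx)
  rw [List.getElem?_eq_getElem (Finset.mem_range.mp hxr)]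
  rfl

lemma isReduced_of_append {a b : List B} (h : cs.IsReduced (a ++ b)) :
    cs.IsReduced a ∧ cs.IsReduced b := by
  have h1 := cs.length_wordProd_le a
  have h2 := cs.length_wordProd_le b
  have h3 : cs.length (cs.wordProd (a ++ b))
      ≤ cs.length (cs.wordProd a) + cs.length (cs.wordProd b) := by
    rw [cs.wordProd_append]; exact cs.length_mul_le _ _
  have h4 : cs.length (cs.wordProd (a ++ b)) = a.length + b.length := by
    rw [h]; simp
  unfold CoxeterSystem.IsReduced at *
  constructor <;> omega

lemma lexLE_false {A C : Finset ℕ} {j : ℕ} (hjC : j ∈ C) (hjA : j ∉ A)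
    (hagree : ∀ i < j, (i ∈ A ↔ i ∈ C)) (h : lexLE A C) : False := by
  rcases h with h | ⟨k, hkA, hkC, hk⟩
  · exact hjA (h ▸ hjC)
  · rcases lt_trichotomy k j with hlt | rfl | hgt
    · exact hkC ((hagree k hlt).mp hkA)
    · exact hjA hkA
    · exact hjA ((hk j hgt).mpr hjC)

end Subword

/-- a subword `α ⊆ ω` is ω-sorted iff it is reduced and there is no
position `j` outside of `α` (with `j` not the last position) such that `ω_j` is a left
descent of the product of the part of `α` strictly after position `j`. -/
theorem isSorted_iff_no_descent (cs : CoxeterSystem M W) (ω : List B)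
    (A : Finset ℕ) (hA : A ⊆ Finset.range ω.length) :
    IsSorted cs ω A ↔
      (cs.IsReduced (subword ω A) ∧
        ¬ ∃ j, ∃ (hj : j + 1 < ω.length), j ∉ A ∧
          cs.length (cs.simple (ω.get ⟨j, Nat.lt_of_succ_lt hj⟩) *
              cs.wordProd (subword ω (A.filter (fun i => j < i)))) <
            cs.length (cs.wordProd (subword ω (A.filter (fun i => j < i))))) := by
  constructor
  · rintro ⟨-, hred, hmin⟩
    refine ⟨hred, ?_⟩
    rintro ⟨j, hj, hjA, hdesc⟩
    set b := ω.get ⟨j, Nat.lt_of_succ_lt hj⟩ with hb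
    set A1 := A.filter (fun i => i ≤ j) with hA1
    set A2 := A.filter (fun i => j < i) with hA2
    have hsplit : subword ω A = subword ω A1 ++ subword ω A2 := subword_split ω A j
    have hA1sub : A1 ⊆ Finset.range ω.length := fun x hx => hA (Finset.mem_filter.mp hx).1
    have hA2sub : A2 ⊆ Finset.range ω.length := fun x hx => hA (Finset.mem_filter.mp hx).1
    have hred2 : cs.IsReduced (subword ω A2) := (isReduced_of_append cs (hsplit ▸ hred)).2
    obtain ⟨n, hn, hex⟩ := exchange cs hred2 hdesc
    have hlen2 : (subword ω A2).length = (A2.sort (· ≤ ·)).length := by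
      rw [subword_length hA2sub, Finset.length_sort]
    have hn' : n < (A2.sort (· ≤ ·)).length := hlen2 ▸ hn
    set k := (A2.sort (· ≤ ·))[n] with hk
    have hkA2 : k ∈ A2 := (Finset.mem_sort (· ≤ ·)).mp (List.getElem_mem hn')
    have hkj : j < k := (Finset.mem_filter.mp hkA2).2
    have hkA : k ∈ A := (Finset.mem_filter.mp hkA2).1
    have herase : subword ω (A2.erase k) = (subword ω A2).eraseIdx n :=
      subword_erase ω A2 hA2sub n hn'
    set C := insert j (A1 ∪ A2.erase k) with hC
    have hmemC : ∀ x, x ∈ C ↔ x = j ∨ (x ∈ A ∧ x ≤ j) ∨ (x ≠ k ∧ x ∈ A ∧ j < x) := by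
      intro x
      simp only [hC, Finset.mem_insert, Finset.mem_union, Finset.mem_erase, hA1, hA2,
        Finset.mem_filter]
    have hCf1 : C.filter (fun i => i ≤ j) = insert j A1 := by
      ext x
      rw [Finset.mem_filter, hmemC x, Finset.mem_insert, hA1, Finset.mem_filter]
      constructor
      · rintro ⟨rfl | ⟨hxA, hxle⟩ | ⟨hxk, hxA, hxgt⟩, hle⟩
        · exact Or.inl rfl
        · exact Or.inr ⟨hxA, hxle⟩
        · omega
      · rintro (rfl | ⟨hxA, hxle⟩)
        · exact ⟨Or.inl rfl, le_refl _⟩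
        · exact ⟨Or.inr (Or.inl ⟨hxA, hxle⟩), hxle⟩
    have hCf2 : C.filter (fun i => j < i) = A2.erase k := by
      ext x
      rw [Finset.mem_filter, hmemC x, Finset.mem_erase, hA2, Finset.mem_filter]
      constructor
      · rintro ⟨rfl | ⟨hxA, hxle⟩ | ⟨hxk, hxA, hxgt⟩, hgt⟩
        · omega
        · omega
        · exact ⟨hxk, hxA, hxgt⟩
      · rintro ⟨hxk, hxA, hxgt⟩
        exact ⟨Or.inr (Or.inr ⟨hxk, hxA, hxgt⟩), hxgt⟩
    have hjA1 : ∀ a ∈ A1, a < j := by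
      intro a ha
      obtain ⟨haA, hale⟩ := Finset.mem_filter.mp ha
      rcases lt_or_eq_of_le hale with h | rfl
      · exact h
      · exact absurd haA hjA
    have hsubC : subword ω C
        = (subword ω A1 ++ [b]) ++ subword ω (A2.erase k) := by
      rw [subword_split ω C j, hCf1, hCf2,
        subword_insert_top (Nat.lt_of_succ_lt hj) hjA1]
    have hcanc : ∀ x y : W, (x * cs.simple b) * (cs.simple b * y) = x * y := by
      intro x y
      rw [mul_assoc, ← mul_assoc (cs.simple b), cs.simple_mul_simple_self, one_mul]
    have hprodC : cs.wordProd (subword ω C) = cs.wordProd (subword ω A) := by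
      rw [hsubC, cs.wordProd_append, cs.wordProd_append, herase, ← hex,
        hsplit, cs.wordProd_append, cs.wordProd_singleton]
      exact hcanc _ _
    have hCsub : C ⊆ Finset.range ω.length := by
      intro x hx
      rcases Finset.mem_insert.mp hx with rfl | hx2
      · exact Finset.mem_range.mpr (Nat.lt_of_succ_lt hj)
      · rcases Finset.mem_union.mp hx2 with hx3 | hx3
        · exact hA1sub hx3
        · exact hA2sub (Finset.erase_subset _ _ hx3)
    have hdisj : Disjoint A1 (A2.erase k) := by
      rw [Finset.disjoint_left]
      intro x h1 h2
      have := (Finset.mem_filter.mp h1).2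
      have := (Finset.mem_filter.mp (Finset.mem_of_mem_erase h2)).2
      omega
    have hcardC : C.card = A.card := by
      have hj1 : j ∉ A1 ∪ A2.erase k := by
        intro hmem
        rcases Finset.mem_union.mp hmem with h | h
        · exact absurd ((Finset.mem_filter.mp h).1) hjA
        · have := (Finset.mem_filter.mp (Finset.mem_of_mem_erase h)).2
          omega
      rw [hC, Finset.card_insert_of_notMem hj1, Finset.card_union_of_disjoint hdisj,
        Finset.card_erase_of_mem hkA2]
      have hs := card_split A j
      have hA2pos : 0 < A2.card := Finset.card_pos.mpr ⟨k, hkA2⟩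
      rw [← hA1, ← hA2] at hs
      omega
    have hredC : cs.IsReduced (subword ω C) := by
      have hred' : cs.length (cs.wordProd (subword ω A)) = (subword ω A).length := hred
      show cs.length (cs.wordProd (subword ω C)) = (subword ω C).length
      rw [hprodC, hred', subword_length hA, subword_length hCsub, hcardC]
    have hlex := hmin C hCsub hredC hprodC
    refine lexLE_false (Finset.mem_insert_self _ _) hjA ?_ hlex
    intro i hij
    rw [hmemC i]
    constructor
    · intro hiA
      exact Or.inr (Or.inl ⟨hiA, le_of_lt hij⟩)
    · rintro (rfl | ⟨hiA, _⟩ | ⟨_, hiA, hgt⟩)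
      · exact absurd hij (lt_irrefl _)
      · exact hiA
      · exact hiA
  · rintro ⟨hred, hnd⟩
    refine ⟨hA, hred, ?_⟩
    intro C hCsub hCred hCprod
    by_cases hAC : A = C
    · exact Or.inl hAC
    have hDne : ((A \ C) ∪ (C \ A)).Nonempty := by
      rw [Finset.nonempty_iff_ne_empty]
      intro hemp
      apply hAC
      ext x
      constructor
      · intro hx
        by_contra hx2
        have : x ∈ (A \ C) ∪ (C \ A) := Finset.mem_union_left _ (Finset.mem_sdiff.mpr ⟨hx, hx2⟩)
        rw [hemp] at this
        exact absurd this (Finset.notMem_empty _)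
      · intro hx
        by_contra hx2
        have : x ∈ (A \ C) ∪ (C \ A) := Finset.mem_union_right _ (Finset.mem_sdiff.mpr ⟨hx, hx2⟩)
        rw [hemp] at this
        exact absurd this (Finset.notMem_empty _)
    set j := ((A \ C) ∪ (C \ A)).min' hDne with hjdef
    have hjmem : j ∈ (A \ C) ∪ (C \ A) := by
      rw [hjdef]; exact Finset.min'_mem _ _
    have hagree : ∀ i < j, (i ∈ A ↔ i ∈ C) := by
      intro i hi
      by_contra hne
      have hiD : i ∈ (A \ C) ∪ (C \ A) := by
        by_cases hiA : i ∈ A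
        · by_cases hiC : i ∈ C
          · exact absurd (iff_of_true hiA hiC) hne
          · exact Finset.mem_union_left _ (Finset.mem_sdiff.mpr ⟨hiA, hiC⟩)
        · by_cases hiC : i ∈ C
          · exact Finset.mem_union_right _ (Finset.mem_sdiff.mpr ⟨hiC, hiA⟩)
          · exact absurd (iff_of_false hiA hiC) hne
      have := Finset.min'_le _ _ hiD
      omega
    rcases Finset.mem_union.mp hjmem with hj1 | hj1
    · obtain ⟨hjA, hjC⟩ := Finset.mem_sdiff.mp hj1
      exact Or.inr ⟨j, hjA, hjC, hagree⟩
    exfalso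
    obtain ⟨hjC, hjA⟩ := Finset.mem_sdiff.mp hj1
    -- derive a descent at position j
    set A1 := A.filter (fun i => i ≤ j) with hA1
    set A2 := A.filter (fun i => j < i) with hA2
    set C2 := C.filter (fun i => j < i) with hC2
    have hA1sub : A1 ⊆ Finset.range ω.length := fun x hx => hA (Finset.mem_filter.mp hx).1
    have hA2sub : A2 ⊆ Finset.range ω.length := fun x hx => hA (Finset.mem_filter.mp hx).1
    have hC2sub : C2 ⊆ Finset.range ω.length := fun x hx => hCsub (Finset.mem_filter.mp hx).1
    have hjlen : j < ω.length := Finset.mem_range.mp (hCsub hjC)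
    have hCf1 : C.filter (fun i => i ≤ j) = insert j A1 := by
      ext x
      rw [Finset.mem_filter, Finset.mem_insert, hA1, Finset.mem_filter]
      constructor
      · rintro ⟨hxC, hxle⟩
        rcases lt_or_eq_of_le hxle with h | rfl
        · exact Or.inr ⟨(hagree x h).mpr hxC, hxle⟩
        · exact Or.inl rfl
      · rintro (rfl | ⟨hxA, hxle⟩)
        · exact ⟨hjC, le_refl _⟩
        · have hxlt : x < j := lt_of_le_of_ne hxle (fun hh => hjA (by rw [← hh]; exact hxA))
          exact ⟨(hagree x hxlt).mp hxA, hxle⟩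
    have hjA1 : ∀ a ∈ A1, a < j := by
      intro a ha
      obtain ⟨haA, hale⟩ := Finset.mem_filter.mp ha
      rcases lt_or_eq_of_le hale with h | rfl
      · exact h
      · exact absurd haA hjA
    have hsplitA : subword ω A = subword ω A1 ++ subword ω A2 := subword_split ω A j
    have hsplitC : subword ω C
        = (subword ω A1 ++ [ω.get ⟨j, hjlen⟩]) ++ subword ω C2 := by
      rw [subword_split ω C j, hCf1, subword_insert_top hjlen hjA1]
    have hredA2 : cs.IsReduced (subword ω A2) :=
      (isReduced_of_append cs (hsplitA ▸ hred)).2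
    have hredC2 : cs.IsReduced (subword ω C2) :=
      (isReduced_of_append cs (hsplitC ▸ hCred)).2
    -- products
    have hkey : cs.simple (ω.get ⟨j, hjlen⟩) * cs.wordProd (subword ω C2)
        = cs.wordProd (subword ω A2) := by
      have h1 := hCprod
      rw [hsplitC, hsplitA, cs.wordProd_append, cs.wordProd_append, cs.wordProd_append,
        cs.wordProd_singleton, mul_assoc] at h1
      exact mul_left_cancel h1
    have hkey2 : cs.simple (ω.get ⟨j, hjlen⟩) * cs.wordProd (subword ω A2)
        = cs.wordProd (subword ω C2) := by
      rw [← hkey, ← mul_assoc, cs.simple_mul_simple_self, one_mul]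
    -- cards
    have hcardAC : A.card = C.card := by
      have h1 : cs.length (cs.wordProd (subword ω A)) = (subword ω A).length := hred
      have h2 : cs.length (cs.wordProd (subword ω C)) = (subword ω C).length := hCred
      rw [hCprod, h1, subword_length hA, subword_length hCsub] at h2
      exact h2
    have hsA := card_split A j
    have hsC := card_split C j
    rw [← hA1, ← hA2] at hsA
    rw [hCf1, ← hC2] at hsC
    have hjnA1 : j ∉ A1 := fun h => absurd ((Finset.mem_filter.mp h).1) hjA
    rw [Finset.card_insert_of_notMem hjnA1] at hsC
    have hA2card : A2.card = C2.card + 1 := by omega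
    -- lengths
    have hlA2 : cs.length (cs.wordProd (subword ω A2)) = A2.card := by
      have h1 : cs.length (cs.wordProd (subword ω A2)) = (subword ω A2).length := hredA2
      rw [h1, subword_length hA2sub]
    have hlC2 : cs.length (cs.wordProd (subword ω C2)) = C2.card := by
      have h1 : cs.length (cs.wordProd (subword ω C2)) = (subword ω C2).length := hredC2
      rw [h1, subword_length hC2sub]
    have hdesc : cs.length (cs.simple (ω.get ⟨j, hjlen⟩) *
        cs.wordProd (subword ω A2)) < cs.length (cs.wordProd (subword ω A2)) := by
      rw [hkey2, hlA2, hlC2, hA2card]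
      omega
    -- j + 1 < ω.length
    have hA2ne : A2.Nonempty := Finset.card_pos.mp (by omega)
    obtain ⟨a, ha⟩ := hA2ne
    have haA : a ∈ A := (Finset.mem_filter.mp ha).1
    have haj : j < a := (Finset.mem_filter.mp ha).2
    have hj1 : j + 1 < ω.length := by
      have := Finset.mem_range.mp (hA haA)
      omega
    exact hnd ⟨j, hj1, hjA, hdesc⟩

end SortingPaper
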